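/- Let p be a prime, α, β ≥ 1, and δ = (β(p-1)+1)·p^{α-1} - 1. Then in the polynomial ring (ℤ/p^βℤ)[X], the remainder of (X-1)^δ upon division by X^{p^α} - 1 equals (-p)^{β-1} · ∑_{j=0}^{p^α - 1} X^j. -/

import Mathlib

open Polynomial Finset

private lemma castmap_lift {p : ℕ} (hp : p.Prime) (f : ℤ[X])
    (h : f.map (Int.castRingHom (ZMod p)) = 0) : ∃ g : ℤ[X], f = (p : ℤ[X]) * g := by
  have hd : (C (p : ℤ)) ∣ f := by
    rw [C_dvd_iff_dvd_coeff]
    intro n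
    have h2 := congrArg (fun q => q.coeff n) h
    simp only [coeff_map, coeff_zero] at h2
    have h3 : ((f.coeff n : ℤ) : ZMod p) = 0 := h2
    exact_mod_cast (ZMod.intCast_zmod_eq_zero_iff_dvd _ _).1 h3
  obtain ⟨g, hg⟩ := hd
  refine ⟨g, ?_⟩
  rw [hg, map_natCast C p]

private lemma frob (p : ℕ) (hp : p.Prime) (n : ℕ) :
    ((X : (ZMod p)[X]) - 1) ^ p ^ n = X ^ p ^ n - 1 := by
  haveI := Fact.mk hp
  rw [sub_pow_char_pow, one_pow]

private lemma lift_freshman (p : ℕ) (hp : p.Prime) (n : ℕ) :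
    ∃ s : ℤ[X], (X - 1 : ℤ[X]) ^ p ^ n = X ^ p ^ n - 1 + (p : ℤ[X]) * s := by
  obtain ⟨g, hg⟩ := castmap_lift hp ((X - 1) ^ p ^ n - (X ^ p ^ n - 1)) (by
    simp only [Polynomial.map_sub, Polynomial.map_pow, Polynomial.map_one, Polynomial.map_X]
    rw [sub_eq_zero]
    exact frob p hp n)
  exact ⟨g, by linear_combination hg⟩

private lemma lift_geom (p : ℕ) (hp : p.Prime) (n : ℕ) :
    ∃ A : ℤ[X], (X - 1 : ℤ[X]) ^ (p ^ n - 1)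
      = (∑ j ∈ range (p ^ n), X ^ j) + (p : ℤ[X]) * A := by
  haveI := Fact.mk hp
  obtain ⟨g, hg⟩ := castmap_lift hp ((X - 1) ^ (p ^ n - 1) - ∑ j ∈ range (p ^ n), X ^ j) (by
    simp only [Polynomial.map_sub, Polynomial.map_pow, Polynomial.map_one, Polynomial.map_X,
      Polynomial.map_sum]
    have hXne : (X - 1 : (ZMod p)[X]) ≠ 0 := by
      simpa using X_sub_C_ne_zero (1 : ZMod p)
    have hmul : (((X : (ZMod p)[X]) - 1) ^ (p ^ n - 1) - ∑ j ∈ range (p ^ n), X ^ j)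
        * (X - 1) = 0 := by
      have h1 : ((X : (ZMod p)[X]) - 1) ^ (p ^ n - 1) * (X - 1) = (X - 1) ^ p ^ n := by
        rw [← pow_succ]
        congr 1
        have := pow_pos hp.pos n
        omega
      rw [sub_mul, h1, frob p hp n, geom_sum_mul, sub_self]
    exact (mul_eq_zero.1 hmul).resolve_right hXne)
  exact ⟨g, by linear_combination hg⟩

private lemma Glemma (p : ℕ) (hp : p.Prime) :
    ∃ H : ℤ[X], (X : ℤ[X]) ^ p - 1 - (X - 1) ^ p
      = (p : ℤ[X]) * ((X - 1) + (X - 1) ^ 2 * H) := by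
  haveI := Fact.mk hp
  have hpz : (p : ℤ) ≠ 0 := Int.natCast_ne_zero.2 hp.ne_zero
  obtain ⟨G, hG⟩ := castmap_lift hp ((X : ℤ[X]) ^ p - 1 - (X - 1) ^ p) (by
    simp only [Polynomial.map_sub, Polynomial.map_pow, Polynomial.map_one, Polynomial.map_X]
    have h1 : ((X : (ZMod p)[X]) - 1) ^ p = X ^ p - 1 := by
      simpa using frob p hp 1
    rw [h1, sub_self])
  -- G has root 1
  have hev : G.eval 1 = 0 := by
    have h := congrArg (eval 1) hG
    simp only [eval_sub, eval_pow, eval_one, eval_X, eval_mul, eval_natCast, sub_self,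
      zero_pow hp.ne_zero, sub_zero, one_pow] at h
    have h2 : (p : ℤ) * G.eval 1 = 0 := by linarith
    rcases mul_eq_zero.1 h2 with h3 | h3
    · exact absurd h3 hpz
    · exact h3
  obtain ⟨G₁, hG₁⟩ := dvd_iff_isRoot.2 hev
  -- derivative information : G₁.eval 1 = 1
  have hder := congrArg derivative hG
  rw [derivative_sub, derivative_sub, derivative_one, derivative_pow, derivative_pow,
    derivative_X, derivative_sub, derivative_X, derivative_one, sub_zero] at hder
  have hder1 := congrArg (eval 1) hder
  have hp1 : p - 1 ≠ 0 := by have := hp.two_le; omega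
  simp only [eval_mul, eval_sub, eval_pow, eval_natCast, eval_X, eval_one, one_pow, mul_one,
    sub_self, zero_pow hp1, mul_zero, sub_zero] at hder1
  rw [derivative_natCast_mul] at hder1
  have hevd : (derivative G).eval 1 = 1 := by
    have h4 : (p : ℤ) * (derivative G).eval 1 = (p : ℤ) * 1 := by
      simpa [eval_mul, eval_natCast] using hder1.symm
    exact mul_left_cancel₀ hpz h4
  have hG₁ev : G₁.eval 1 = 1 := by
    have h := congrArg (eval 1) (congrArg derivative hG₁)
    rw [derivative_mul, derivative_sub, derivative_X, derivative_C, sub_zero] at h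
    simp only [eval_add, eval_mul, eval_sub, eval_X, eval_C, eval_one, sub_self, zero_mul,
      one_mul, add_zero, mul_zero, hevd] at h
    linarith [h]
  obtain ⟨H, hH⟩ := dvd_iff_isRoot.2 (show (G₁ - 1).IsRoot 1 by
    simp [IsRoot, hG₁ev])
  refine ⟨H, ?_⟩
  simp only [C_1] at hG₁ hH
  linear_combination hG + (p : ℤ[X]) * hG₁ + (p : ℤ[X]) * (X - 1) * hH

private lemma engine {R : Type*} [CommRing R]
    (P y Y1 Z A A' B b a₁ a₂ N N' Φ M : R) (m : ℕ)
    (hZ : Z = Y1 * y)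
    (hA : Y1 * Z ^ (m + 1) = N + P * A)
    (hA' : Y1 = N' + P * A')
    (hA2 : A = -Y1 + P * a₁ + Z * a₂)
    (hB : Z ^ (m + 1) = Φ + P * B)
    (hb : B = -1 + y * b)
    (hNΦ : N' * Φ = N)
    (hM : N * y = M) :
    ∀ k : ℕ, ∃ W u v c : R,
      Y1 * Z ^ (m + 1) * (Z ^ (m + 1)) ^ k = (-P) ^ k * (N + P * W) + M * c
        ∧ W = -Y1 + P * u + Z * v := by
  intro k
  induction k with
  | zero => exact ⟨A, a₁, a₂, 0, by linear_combination hA, hA2⟩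
  | succ k ih =>
    obtain ⟨W, u, v, c, ih1, ih2⟩ := ih
    have eY1S : Y1 * Z ^ (m + 1) = N + P * (N' * B + A' * Z ^ (m + 1)) := by
      linear_combination Z ^ (m + 1) * hA' + N' * hB + hNΦ
    have e10 : N' * B = -Y1 + Y1 * y * b + P * A' - P * A' * y * b := by
      linear_combination (-B) * hA' + (Y1 - P * A') * hb
    have hWS : W * Z ^ (m + 1)
        = -N + P * (Y1 + P * (A' * B + v * y * a₁)
            + Z * (-(A' * Z ^ m) + u * Z ^ m + v * y * a₂ - v - b)) + M * v := by
      linear_combination Z ^ (m + 1) * ih2 - eY1S + v * hM - P * e10 + P * v * y * hA2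
        + v * y * hA - P * P * A' * hb + (P * v + P * b + Z ^ (m + 1) * v) * hZ
    refine ⟨-Y1 + P * (-(A' * B + v * y * a₁))
        + Z * (-(-(A' * Z ^ m) + u * Z ^ m + v * y * a₂ - v - b)),
      -(A' * B + v * y * a₁), -(-(A' * Z ^ m) + u * Z ^ m + v * y * a₂ - v - b),
      -((-P) ^ k * (-P)) * v + (-P) ^ k * Y1 * Z ^ m + c * Z ^ (m + 1), ?_, rfl⟩
    rw [pow_succ (Z ^ (m + 1)) k, pow_succ (-P) k]
    linear_combination Z ^ (m + 1) * ih1 + (-P) ^ k * Y1 * Z ^ m * hM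
      + (-P) ^ k * P * hWS + (-P) ^ k * N * Z ^ m * hZ

private lemma B_decomp (p : ℕ) (hp : p.Prime) (a : ℕ) :
    ∃ B b : ℤ[X], (X - 1 : ℤ[X]) ^ (p ^ a * (p - 1))
        = (∑ j ∈ range p, (X ^ p ^ a) ^ j) + (p : ℤ[X]) * B
      ∧ B = -1 + (X - 1) * b := by
  haveI := Fact.mk hp
  have hp2 := hp.two_le
  have hpz : (p : ℤ) ≠ 0 := Int.natCast_ne_zero.2 hp.ne_zero
  have hsum : p ^ a * (p - 1) + p ^ a = p ^ (a + 1) := by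
    have h2 : p - 1 + 1 = p := by omega
    calc p ^ a * (p - 1) + p ^ a = p ^ a * (p - 1 + 1) := by ring
      _ = p ^ a * p := by rw [h2]
      _ = p ^ (a + 1) := (pow_succ p a).symm
  obtain ⟨B, hB0⟩ := castmap_lift hp
      ((X - 1) ^ (p ^ a * (p - 1)) - ∑ j ∈ range p, (X ^ p ^ a) ^ j) (by
    simp only [Polynomial.map_sub, Polynomial.map_pow, Polynomial.map_one, Polynomial.map_X,
      Polynomial.map_sum]
    have hXne : (X - 1 : (ZMod p)[X]) ≠ 0 := by
      simpa using X_sub_C_ne_zero (1 : ZMod p)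
    have hcancel : (((X : (ZMod p)[X]) - 1) ^ (p ^ a * (p - 1)) - ∑ j ∈ range p, (X ^ p ^ a) ^ j)
        * (X - 1) ^ p ^ a = 0 := by
      have h1 : ((X : (ZMod p)[X]) - 1) ^ (p ^ a * (p - 1)) * (X - 1) ^ p ^ a
          = X ^ p ^ (a + 1) - 1 := by
        rw [← pow_add, hsum, frob p hp (a + 1)]
      have h2 : (∑ j ∈ range p, ((X : (ZMod p)[X]) ^ p ^ a) ^ j) * (X - 1) ^ p ^ a
          = X ^ p ^ (a + 1) - 1 := by
        rw [frob p hp a, geom_sum_mul, ← pow_mul, ← pow_succ]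
      rw [sub_mul, h1, h2, sub_self]
    exact (mul_eq_zero.1 hcancel).resolve_right (pow_ne_zero _ hXne))
  have hBeval : B.eval 1 = -1 := by
    have h := congrArg (eval 1) hB0
    have hφpos : p ^ a * (p - 1) ≠ 0 := by
      have := pow_pos hp.pos a
      have : p ^ a * (p - 1) > 0 := Nat.mul_pos (pow_pos hp.pos a) (by omega)
      omega
    simp only [eval_sub, eval_pow, eval_one, eval_X, eval_mul, eval_natCast, eval_finset_sum,
      sub_self, zero_pow hφpos, one_pow, Finset.sum_const, card_range, nsmul_eq_mul, mul_one,
      zero_sub] at h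
    have h2 : (p : ℤ) * (1 + B.eval 1) = 0 := by linarith
    rcases mul_eq_zero.1 h2 with h3 | h3
    · exact absurd h3 hpz
    · linarith
  obtain ⟨b, hb⟩ := dvd_iff_isRoot.2 (show (B + 1).IsRoot 1 by simp [IsRoot, hBeval])
  simp only [C_1] at hb
  exact ⟨B, b, by linear_combination hB0, by linear_combination hb⟩

private lemma A_decomp (p : ℕ) (hp : p.Prime) (a : ℕ) (A : ℤ[X])
    (hA : (X - 1 : ℤ[X]) ^ (p ^ (a + 1) - 1)
      = (∑ j ∈ range (p ^ (a + 1)), X ^ j) + (p : ℤ[X]) * A) :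
    ∃ a₁ a₂ : ℤ[X], A = -(X - 1) ^ (p ^ a - 1) + (p : ℤ[X]) * a₁ + (X - 1) ^ p ^ a * a₂ := by
  haveI := Fact.mk hp
  have hPne : ((p : ℤ[X])) ≠ 0 := by
    simp only [Ne, Nat.cast_eq_zero]
    exact hp.ne_zero
  obtain ⟨H, hH⟩ := Glemma p hp
  obtain ⟨s, hs⟩ := lift_freshman p hp a
  -- composed identity
  have hcomp : (X : ℤ[X]) ^ p ^ (a + 1) - 1 - (X ^ p ^ a - 1) ^ p
      = (p : ℤ[X]) * ((X ^ p ^ a - 1) + (X ^ p ^ a - 1) ^ 2 * H.comp (X ^ p ^ a)) := by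
    have h := congrArg (fun f : ℤ[X] => f.comp (X ^ p ^ a)) hH
    simp only [sub_comp, pow_comp, X_comp, one_comp, mul_comp, add_comp, natCast_comp] at h
    rwa [← pow_mul, ← pow_succ] at h
  -- p^2 divisibility
  obtain ⟨t₂, ht₂⟩ : ∃ t₂ : ℤ[X],
      ((X - 1 : ℤ[X]) ^ p ^ a) ^ p - (X ^ p ^ a - 1) ^ p = (p : ℤ[X]) ^ 2 * t₂ := by
    have h := dvd_sub_pow_of_dvd_sub (R := ℤ[X]) (p := p)
      (a := (X - 1) ^ p ^ a) (b := X ^ p ^ a - 1) ⟨s, by linear_combination hs⟩ 1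
    rw [pow_one] at h
    obtain ⟨t₂, ht₂⟩ := h
    exact ⟨t₂, ht₂⟩
  have f1 : (X - 1 : ℤ[X]) ^ (p ^ (a + 1) - 1) * (X - 1) = ((X - 1) ^ p ^ a) ^ p := by
    rw [← pow_succ, ← pow_mul, ← pow_succ]
    congr 1
    have := pow_pos hp.pos (a + 1)
    omega
  have hMgeom : (∑ j ∈ range (p ^ (a + 1)), (X : ℤ[X]) ^ j) * (X - 1) = X ^ p ^ (a + 1) - 1 :=
    geom_sum_mul X (p ^ (a + 1))
  have hAy : A * (X - 1) = -((X ^ p ^ a - 1) + (X ^ p ^ a - 1) ^ 2 * H.comp (X ^ p ^ a))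
      + (p : ℤ[X]) * t₂ := by
    apply mul_left_cancel₀ hPne
    linear_combination (-(X - 1)) * hA + f1 - hMgeom + ht₂ - hcomp
  -- reduce mod p
  have hXne : (X - 1 : (ZMod p)[X]) ≠ 0 := by
    simpa using X_sub_C_ne_zero (1 : ZMod p)
  have h𝔽 : (A.map (Int.castRingHom (ZMod p))) * (X - 1)
      = -((X - 1) ^ p ^ a + ((X - 1) ^ p ^ a) ^ 2
          * (H.comp (X ^ p ^ a)).map (Int.castRingHom (ZMod p))) := by
    have h := congrArg (Polynomial.map (Int.castRingHom (ZMod p))) hAy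
    simp only [Polynomial.map_mul, Polynomial.map_sub, Polynomial.map_add, Polynomial.map_neg,
      Polynomial.map_pow, Polynomial.map_one, Polynomial.map_X, Polynomial.map_natCast,
      ZMod.natCast_self, Polynomial.C_0] at h
    rw [show ((X : (ZMod p)[X]) ^ p ^ a - 1) = (X - 1) ^ p ^ a from (frob p hp a).symm] at h
    simpa using h
  have f2 : ((X : (ZMod p)[X]) - 1) ^ (p ^ a - 1) * (X - 1) = (X - 1) ^ p ^ a := by
    rw [← pow_succ]
    congr 1
    have := pow_pos hp.pos a
    omega
  have h𝔽2 : A.map (Int.castRingHom (ZMod p))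
      = -((X - 1) ^ (p ^ a - 1)) - (X - 1) ^ p ^ a
          * ((X - 1) ^ (p ^ a - 1) * (H.comp (X ^ p ^ a)).map (Int.castRingHom (ZMod p))) := by
    apply mul_right_cancel₀ hXne
    linear_combination h𝔽 + (1 + (X - 1 : (ZMod p)[X]) ^ p ^ a
      * (H.comp (X ^ p ^ a)).map (Int.castRingHom (ZMod p))) * f2
  obtain ⟨a₁, ha₁⟩ := castmap_lift hp
      (A + (X - 1) ^ (p ^ a - 1) + (X - 1) ^ p ^ a * ((X - 1) ^ (p ^ a - 1) * H.comp (X ^ p ^ a)))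
      (by
        simp only [Polynomial.map_add, Polynomial.map_mul, Polynomial.map_pow,
          Polynomial.map_sub, Polynomial.map_one, Polynomial.map_X]
        linear_combination h𝔽2)
  exact ⟨a₁, -((X - 1) ^ (p ^ a - 1) * H.comp (X ^ p ^ a)), by linear_combination ha₁⟩

private lemma key_int (p : ℕ) (hp : p.Prime) (a k : ℕ) :
    ∃ W c : ℤ[X],
      (X - 1 : ℤ[X]) ^ (p ^ (a + 1) - 1 + k * (p ^ a * (p - 1)))
        = (-(p : ℤ[X])) ^ k * ((∑ j ∈ range (p ^ (a + 1)), X ^ j) + (p : ℤ[X]) * W)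
          + (X ^ p ^ (a + 1) - 1) * c := by
  haveI := Fact.mk hp
  have hp2 := hp.two_le
  obtain ⟨t, ht⟩ : ∃ t, p ^ a = t + 1 := ⟨p ^ a - 1, by have := pow_pos hp.pos a; omega⟩
  obtain ⟨m, hm⟩ : ∃ m, p = m + 2 := ⟨p - 2, by omega⟩
  have hE1 : p ^ a - 1 = t := by omega
  have e2 : p ^ (a + 1) - 1 = t + p ^ a * (m + 1) := by
    have h1 : p ^ (a + 1) = (t + p ^ a * (m + 1)) + 1 := by
      rw [pow_succ, ht, hm]; ring
    rw [h1]
    exact Nat.add_sub_cancel _ _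
  have e3 : p ^ a * (p - 1) = p ^ a * (m + 1) := by
    congr 1
    omega
  have hXne : (X - 1 : ℤ[X]) ≠ 0 := by
    simpa using X_sub_C_ne_zero (1 : ℤ)
  -- ingredients
  obtain ⟨A, hA0⟩ := lift_geom p hp (a + 1)
  obtain ⟨A', hA'0⟩ := lift_geom p hp a
  obtain ⟨a₁, a₂, hA2⟩ := A_decomp p hp a A hA0
  obtain ⟨B, b, hB0, hb⟩ := B_decomp p hp a
  -- conversions
  have c1 : (X - 1 : ℤ[X]) ^ (p ^ (a + 1) - 1)
      = (X - 1) ^ t * ((X - 1) ^ p ^ a) ^ (m + 1) := by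
    rw [e2, pow_add, pow_mul]
  have c2 : (X - 1 : ℤ[X]) ^ (p ^ a * (p - 1)) = ((X - 1) ^ p ^ a) ^ (m + 1) := by
    rw [e3, pow_mul]
  rw [c1] at hA0
  rw [hE1] at hA'0 hA2
  rw [c2] at hB0
  -- ring facts
  have hM : (∑ j ∈ range (p ^ (a + 1)), (X : ℤ[X]) ^ j) * (X - 1) = X ^ p ^ (a + 1) - 1 :=
    geom_sum_mul X (p ^ (a + 1))
  have hN' : (∑ j ∈ range (p ^ a), (X : ℤ[X]) ^ j) * (X - 1) = X ^ p ^ a - 1 :=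
    geom_sum_mul X (p ^ a)
  have hΦm : (∑ j ∈ range p, ((X : ℤ[X]) ^ p ^ a) ^ j) * (X ^ p ^ a - 1) = X ^ p ^ (a + 1) - 1 := by
    rw [geom_sum_mul, ← pow_mul, ← pow_succ]
  have hNΦ : (∑ j ∈ range (p ^ a), (X : ℤ[X]) ^ j) * (∑ j ∈ range p, ((X : ℤ[X]) ^ p ^ a) ^ j)
      = ∑ j ∈ range (p ^ (a + 1)), (X : ℤ[X]) ^ j := by
    apply mul_right_cancel₀ hXne
    calc (∑ j ∈ range (p ^ a), (X : ℤ[X]) ^ j) * (∑ j ∈ range p, ((X : ℤ[X]) ^ p ^ a) ^ j)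
          * (X - 1)
        = (∑ j ∈ range p, ((X : ℤ[X]) ^ p ^ a) ^ j)
            * ((∑ j ∈ range (p ^ a), (X : ℤ[X]) ^ j) * (X - 1)) := by ring
      _ = (∑ j ∈ range p, ((X : ℤ[X]) ^ p ^ a) ^ j) * (X ^ p ^ a - 1) := by rw [hN']
      _ = X ^ p ^ (a + 1) - 1 := hΦm
      _ = (∑ j ∈ range (p ^ (a + 1)), (X : ℤ[X]) ^ j) * (X - 1) := hM.symm
  have hZ : (X - 1 : ℤ[X]) ^ p ^ a = (X - 1) ^ t * (X - 1) := by
    rw [ht, pow_succ]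
  -- engine
  obtain ⟨W, u, v, c, hk1, -⟩ := engine ((p : ℤ[X])) (X - 1) ((X - 1) ^ t) ((X - 1) ^ p ^ a)
    A A' B b a₁ a₂ (∑ j ∈ range (p ^ (a + 1)), X ^ j) (∑ j ∈ range (p ^ a), X ^ j)
    (∑ j ∈ range p, ((X : ℤ[X]) ^ p ^ a) ^ j) (X ^ p ^ (a + 1) - 1) m
    hZ hA0 hA'0 hA2 hB0 hb hNΦ hM k
  refine ⟨W, c, ?_⟩
  rw [pow_add, c1, show k * (p ^ a * (p - 1)) = p ^ a * (m + 1) * k from by rw [e3]; ring,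
    pow_mul, pow_mul]
  exact hk1

theorem pow_sub_one_modByMonic (p : ℕ) (hp : p.Prime) (α β : ℕ) (hα : 1 ≤ α) (hβ : 1 ≤ β) :
    ((X - 1 : (ZMod (p ^ β))[X]) ^ ((β * (p - 1) + 1) * p ^ (α - 1) - 1)) %ₘ
        (X ^ (p ^ α) - 1) =
      C ((-(p : ZMod (p ^ β))) ^ (β - 1)) * ∑ j ∈ Finset.range (p ^ α), X ^ j := by
  obtain ⟨a, rfl⟩ : ∃ a, α = a + 1 := ⟨α - 1, by omega⟩
  obtain ⟨k, rfl⟩ : ∃ k, β = k + 1 := ⟨β - 1, by omega⟩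
  simp only [Nat.add_sub_cancel]
  have hp2 := hp.two_le
  obtain ⟨t, ht⟩ : ∃ t, p ^ a = t + 1 := ⟨p ^ a - 1, by have := pow_pos hp.pos a; omega⟩
  obtain ⟨m, hm⟩ : ∃ m, p = m + 2 := ⟨p - 2, by omega⟩
  have hp1 : p - 1 = m + 1 := by omega
  -- exponent equality
  have hδ : ((k + 1) * (p - 1) + 1) * p ^ a - 1 = p ^ (a + 1) - 1 + k * (p ^ a * (p - 1)) := by
    have hq1 : p ^ (a + 1) - 1 = t + (t + 1) * (m + 1) := by
      have h1 : p ^ (a + 1) = (t + (t + 1) * (m + 1)) + 1 := by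
        rw [pow_succ, ht, hm]; ring
      rw [h1]
      exact Nat.add_sub_cancel _ _
    have h1 : ((k + 1) * (p - 1) + 1) * p ^ a
        = (p ^ (a + 1) - 1 + k * (p ^ a * (p - 1))) + 1 := by
      rw [hq1, hp1, ht]; ring
    rw [h1]
    exact Nat.add_sub_cancel _ _
  rw [hδ]
  obtain ⟨W, c, hkey⟩ := key_int p hp a k
  -- map to ZMod (p ^ (k+1))
  have hmap := congrArg (Polynomial.map (Int.castRingHom (ZMod (p ^ (k + 1))))) hkey
  simp only [Polynomial.map_pow, Polynomial.map_sub, Polynomial.map_one, Polynomial.map_X,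
    Polynomial.map_mul, Polynomial.map_add, Polynomial.map_neg, Polynomial.map_natCast,
    Polynomial.map_sum] at hmap
  have hzero : ((p : (ZMod (p ^ (k + 1)))[X])) ^ (k + 1) = 0 := by
    have h1 : ((p ^ (k + 1) : ℕ) : ZMod (p ^ (k + 1))) = 0 := ZMod.natCast_self _
    calc ((p : (ZMod (p ^ (k + 1)))[X])) ^ (k + 1)
        = ((p ^ (k + 1) : ℕ) : (ZMod (p ^ (k + 1)))[X]) := by push_cast; ring
      _ = C ((p ^ (k + 1) : ℕ) : ZMod (p ^ (k + 1))) := by rw [C_eq_natCast]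
      _ = 0 := by rw [h1, C_0]
  have hkill : (-(p : (ZMod (p ^ (k + 1)))[X])) ^ k
      * ((p : (ZMod (p ^ (k + 1)))[X]) * W.map (Int.castRingHom (ZMod (p ^ (k + 1))))) = 0 := by
    calc (-(p : (ZMod (p ^ (k + 1)))[X])) ^ k
          * ((p : (ZMod (p ^ (k + 1)))[X]) * W.map (Int.castRingHom (ZMod (p ^ (k + 1)))))
        = (-1) ^ k * W.map (Int.castRingHom (ZMod (p ^ (k + 1))))
            * ((p : (ZMod (p ^ (k + 1)))[X])) ^ (k + 1) := by rw [neg_pow]; ring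
      _ = 0 := by rw [hzero, mul_zero]
  have hC : C ((-(p : ZMod (p ^ (k + 1)))) ^ k) = (-(p : (ZMod (p ^ (k + 1)))[X])) ^ k := by
    rw [map_pow, map_neg, map_natCast]
  have hmain : ((X - 1 : (ZMod (p ^ (k + 1)))[X]))
        ^ (p ^ (a + 1) - 1 + k * (p ^ a * (p - 1)))
      = C ((-(p : ZMod (p ^ (k + 1)))) ^ k) * (∑ j ∈ range (p ^ (a + 1)), X ^ j)
        + (X ^ p ^ (a + 1) - 1) * c.map (Int.castRingHom (ZMod (p ^ (k + 1)))) := by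
    rw [hC, hmap]
    linear_combination hkill
  -- modByMonic
  haveI : NeZero (p ^ (k + 1)) := ⟨(pow_pos hp.pos _).ne'⟩
  haveI : Fact (1 < p ^ (k + 1)) := ⟨Nat.one_lt_pow (Nat.succ_ne_zero k) hp.one_lt⟩
  have hmonic : (X ^ p ^ (a + 1) - 1 : (ZMod (p ^ (k + 1)))[X]).Monic := by
    have := monic_X_pow_sub_C (1 : ZMod (p ^ (k + 1))) (n := p ^ (a + 1)) (pow_pos hp.pos _).ne'
    simpa using this
  have hdegg : (X ^ p ^ (a + 1) - 1 : (ZMod (p ^ (k + 1)))[X]).degree = (p ^ (a + 1) : ℕ) := by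
    rw [show (1 : (ZMod (p ^ (k + 1)))[X]) = C 1 from C_1.symm]
    exact degree_X_pow_sub_C (pow_pos hp.pos _) _
  have hdegN : (∑ j ∈ range (p ^ (a + 1)), (X : (ZMod (p ^ (k + 1)))[X]) ^ j).degree
      < ((p ^ (a + 1) : ℕ) : WithBot ℕ) := by
    refine lt_of_le_of_lt (degree_sum_le _ _) ?_
    rw [Finset.sup_lt_iff (WithBot.bot_lt_coe _)]
    intro j hj
    rw [degree_X_pow]
    exact_mod_cast mem_range.1 hj
  have hdeg : (C ((-(p : ZMod (p ^ (k + 1)))) ^ k)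
        * ∑ j ∈ range (p ^ (a + 1)), (X : (ZMod (p ^ (k + 1)))[X]) ^ j).degree
      < (X ^ p ^ (a + 1) - 1 : (ZMod (p ^ (k + 1)))[X]).degree := by
    rw [hdegg]
    calc (C ((-(p : ZMod (p ^ (k + 1)))) ^ k)
          * ∑ j ∈ range (p ^ (a + 1)), (X : (ZMod (p ^ (k + 1)))[X]) ^ j).degree
        ≤ (C ((-(p : ZMod (p ^ (k + 1)))) ^ k)).degree
            + (∑ j ∈ range (p ^ (a + 1)), (X : (ZMod (p ^ (k + 1)))[X]) ^ j).degree :=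
          degree_mul_le _ _
      _ ≤ 0 + (∑ j ∈ range (p ^ (a + 1)), (X : (ZMod (p ^ (k + 1)))[X]) ^ j).degree :=
          add_le_add degree_C_le le_rfl
      _ = (∑ j ∈ range (p ^ (a + 1)), (X : (ZMod (p ^ (k + 1)))[X]) ^ j).degree := zero_add _
      _ < _ := hdegN
  exact (div_modByMonic_unique (c.map (Int.castRingHom (ZMod (p ^ (k + 1)))))
    (C ((-(p : ZMod (p ^ (k + 1)))) ^ k) * ∑ j ∈ range (p ^ (a + 1)), X ^ j) hmonic
    ⟨hmain.symm, hdeg⟩).2
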